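/- Let C be a monoidal category and G a 2-group, and let (F, F_⊗) satisfy the associativity compatibility (SF1). An isomorphism F_1 : 1' → F1 satisfies the two unit axioms (SF3) if and only if it makes the single square commute: F(d) ∘ F_⊗(1,1) ∘ (id_{F1} ⊗' F_1) = r'_{F1}, where d : 1 ⊗ 1 → 1 is the basic unitor of C. -/

import Mathlib

open CategoryTheory MonoidalCategory

/-- Let `C` be a monoidal category, `G` a 2-group, and `(F, Fm)` satisfy (SF1).
An isomorphism `F₁ : 𝟙_ G ⟶ F.obj (𝟙_ C)` satisfies the two unit axioms (SF3) iff it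
makes the single square `(id ⊗ F₁) ≫ Fm 1 1 ≫ F d = ρ'_{F1}` commute, where
`d = λ_ (𝟙_ C) = ρ_ (𝟙_ C)` is the basic unitor of `C`. -/
theorem stmt3 {C G : Type*} [Category C] [MonoidalCategory C]
    [Groupoid G] [MonoidalCategory G]
    (hinv : ∀ x : G, ∃ y : G, Nonempty (x ⊗ y ≅ 𝟙_ G) ∧ Nonempty (y ⊗ x ≅ 𝟙_ G))
    (F : C ⥤ G) (Fm : ∀ x y : C, F.obj x ⊗ F.obj y ⟶ F.obj (x ⊗ y))
    (hiso : ∀ x y : C, IsIso (Fm x y))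
    (hnat : ∀ {x x' y y' : C} (f : x ⟶ x') (g : y ⟶ y'),
      (F.map f ⊗ₘ F.map g) ≫ Fm x' y' = Fm x y ≫ F.map (f ⊗ₘ g))
    (hSF1 : ∀ x y z : C,
      (Fm x y ▷ F.obj z) ≫ Fm (x ⊗ y) z ≫ F.map (α_ x y z).hom =
        (α_ (F.obj x) (F.obj y) (F.obj z)).hom ≫ (F.obj x ◁ Fm y z) ≫ Fm x (y ⊗ z))
    (F₁ : 𝟙_ G ⟶ F.obj (𝟙_ C)) (hF₁ : IsIso F₁) :
    ((∀ x : C, (F₁ ▷ F.obj x) ≫ Fm (𝟙_ C) x ≫ F.map (λ_ x).hom = (λ_ (F.obj x)).hom) ∧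
     (∀ x : C, (F.obj x ◁ F₁) ≫ Fm x (𝟙_ C) ≫ F.map (ρ_ x).hom = (ρ_ (F.obj x)).hom)) ↔
    (F.obj (𝟙_ C) ◁ F₁) ≫ Fm (𝟙_ C) (𝟙_ C) ≫ F.map (λ_ (𝟙_ C)).hom =
      (ρ_ (F.obj (𝟙_ C))).hom := by
  haveI := hF₁
  constructor
  · rintro ⟨-, hr⟩
    have h := hr (𝟙_ C)
    rwa [show (ρ_ (𝟙_ C)).hom = (λ_ (𝟙_ C)).hom from unitors_equal.symm] at h
  · intro hsq
    -- cancellation of left whiskering by F.obj (𝟙_ C)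
    have cancel_left : ∀ {A B : G} (f g : A ⟶ B),
        F.obj (𝟙_ C) ◁ f = F.obj (𝟙_ C) ◁ g → f = g := by
      intro A B f g h
      have h1 := whisker_exchange F₁ f
      have h2 := whisker_exchange F₁ g
      rw [h, ← h2] at h1
      have h3 : 𝟙_ G ◁ f = 𝟙_ G ◁ g := (cancel_mono (F₁ ▷ B)).1 h1
      calc f = (λ_ A).inv ≫ (𝟙_ G ◁ f) ≫ (λ_ B).hom := by simp
        _ = (λ_ A).inv ≫ (𝟙_ G ◁ g) ≫ (λ_ B).hom := by rw [h3]
        _ = g := by simp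
    have cancel_right : ∀ {A B : G} (f g : A ⟶ B),
        f ▷ F.obj (𝟙_ C) = g ▷ F.obj (𝟙_ C) → f = g := by
      intro A B f g h
      have h1 := whisker_exchange f F₁
      have h2 := whisker_exchange g F₁
      rw [h, h2] at h1
      have h3 : f ▷ 𝟙_ G = g ▷ 𝟙_ G := ((cancel_mono (B ◁ F₁)).1 h1).symm
      calc f = (ρ_ A).inv ≫ (f ▷ 𝟙_ G) ≫ (ρ_ B).hom := by simp
        _ = (ρ_ A).inv ≫ (g ▷ 𝟙_ G) ≫ (ρ_ B).hom := by rw [h3]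
        _ = g := by simp
    have hlam : ∀ x : C,
        (F₁ ▷ F.obj x) ≫ Fm (𝟙_ C) x ≫ F.map (λ_ x).hom = (λ_ (F.obj x)).hom := by
      intro x
      apply cancel_left
      haveI := hiso (𝟙_ C) x
      apply (cancel_mono (Fm (𝟙_ C) x)).1
      have nat1 : (F.obj (𝟙_ C) ◁ F.map (λ_ x).hom) ≫ Fm (𝟙_ C) x
          = Fm (𝟙_ C) (𝟙_ C ⊗ x) ≫ F.map (𝟙_ C ◁ (λ_ x).hom) := by
        have := hnat (𝟙 (𝟙_ C)) (λ_ x).hom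
        rwa [F.map_id, id_tensorHom, id_tensorHom] at this
      have nat2 : Fm ((𝟙_ C) ⊗ (𝟙_ C)) x ≫ F.map ((λ_ (𝟙_ C)).hom ▷ x)
          = (F.map (λ_ (𝟙_ C)).hom ▷ F.obj x) ≫ Fm (𝟙_ C) x := by
        have := hnat (λ_ (𝟙_ C)).hom (𝟙 x)
        rw [F.map_id, tensorHom_id, tensorHom_id] at this
        exact this.symm
      have sf1 : (F.obj (𝟙_ C) ◁ Fm (𝟙_ C) x) ≫ Fm (𝟙_ C) ((𝟙_ C) ⊗ x)
          = (α_ (F.obj (𝟙_ C)) (F.obj (𝟙_ C)) (F.obj x)).inv ≫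
            (Fm (𝟙_ C) (𝟙_ C) ▷ F.obj x) ≫ Fm ((𝟙_ C) ⊗ (𝟙_ C)) x ≫
            F.map (α_ (𝟙_ C) (𝟙_ C) x).hom := by
        rw [hSF1 (𝟙_ C) (𝟙_ C) x, Iso.inv_hom_id_assoc]
      have tri : F.map (α_ (𝟙_ C) (𝟙_ C) x).hom ≫ F.map ((𝟙_ C) ◁ (λ_ x).hom)
          = F.map ((λ_ (𝟙_ C)).hom ▷ x) := by
        rw [← F.map_comp, MonoidalCategory.triangle, ← unitors_equal]
      calc (F.obj (𝟙_ C) ◁ ((F₁ ▷ F.obj x) ≫ Fm (𝟙_ C) x ≫ F.map (λ_ x).hom)) ≫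
              Fm (𝟙_ C) x
          = (F.obj (𝟙_ C) ◁ (F₁ ▷ F.obj x)) ≫ (F.obj (𝟙_ C) ◁ Fm (𝟙_ C) x) ≫
              Fm (𝟙_ C) (𝟙_ C ⊗ x) ≫ F.map (𝟙_ C ◁ (λ_ x).hom) := by
            simp only [MonoidalCategory.whiskerLeft_comp, Category.assoc]
            rw [nat1]
        _ = (F.obj (𝟙_ C) ◁ (F₁ ▷ F.obj x)) ≫
              (α_ (F.obj (𝟙_ C)) (F.obj (𝟙_ C)) (F.obj x)).inv ≫
              (Fm (𝟙_ C) (𝟙_ C) ▷ F.obj x) ≫ Fm ((𝟙_ C) ⊗ (𝟙_ C)) x ≫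
              F.map (α_ (𝟙_ C) (𝟙_ C) x).hom ≫ F.map (𝟙_ C ◁ (λ_ x).hom) := by
            rw [reassoc_of% sf1]
        _ = (F.obj (𝟙_ C) ◁ (F₁ ▷ F.obj x)) ≫
              (α_ (F.obj (𝟙_ C)) (F.obj (𝟙_ C)) (F.obj x)).inv ≫
              (Fm (𝟙_ C) (𝟙_ C) ▷ F.obj x) ≫
              (F.map (λ_ (𝟙_ C)).hom ▷ F.obj x) ≫ Fm (𝟙_ C) x := by
            rw [tri, nat2]
        _ = (α_ (F.obj (𝟙_ C)) (𝟙_ G) (F.obj x)).inv ≫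
              (((F.obj (𝟙_ C) ◁ F₁) ≫ Fm (𝟙_ C) (𝟙_ C) ≫ F.map (λ_ (𝟙_ C)).hom) ▷
                F.obj x) ≫ Fm (𝟙_ C) x := by
            simp only [comp_whiskerRight, Category.assoc, whisker_assoc]
            simp
        _ = (α_ (F.obj (𝟙_ C)) (𝟙_ G) (F.obj x)).inv ≫
              ((ρ_ (F.obj (𝟙_ C))).hom ▷ F.obj x) ≫ Fm (𝟙_ C) x := by rw [hsq]
        _ = (F.obj (𝟙_ C) ◁ (λ_ (F.obj x)).hom) ≫ Fm (𝟙_ C) x := by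
            rw [← MonoidalCategory.triangle]
            simp
    have hrho : ∀ x : C,
        (F.obj x ◁ F₁) ≫ Fm x (𝟙_ C) ≫ F.map (ρ_ x).hom = (ρ_ (F.obj x)).hom := by
      intro x
      apply cancel_right
      haveI := hiso x (𝟙_ C)
      apply (cancel_mono (Fm x (𝟙_ C))).1
      have nat1 : (F.map (ρ_ x).hom ▷ F.obj (𝟙_ C)) ≫ Fm x (𝟙_ C)
          = Fm (x ⊗ 𝟙_ C) (𝟙_ C) ≫ F.map ((ρ_ x).hom ▷ 𝟙_ C) := by
        have := hnat (ρ_ x).hom (𝟙 (𝟙_ C))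
        rwa [F.map_id, tensorHom_id, tensorHom_id] at this
      have nat2 : Fm x ((𝟙_ C) ⊗ (𝟙_ C)) ≫ F.map (x ◁ (λ_ (𝟙_ C)).hom)
          = (F.obj x ◁ F.map (λ_ (𝟙_ C)).hom) ≫ Fm x (𝟙_ C) := by
        have := hnat (𝟙 x) (λ_ (𝟙_ C)).hom
        rw [F.map_id, id_tensorHom, id_tensorHom] at this
        exact this.symm
      have sf1 : (Fm x (𝟙_ C) ▷ F.obj (𝟙_ C)) ≫ Fm (x ⊗ 𝟙_ C) (𝟙_ C)
          = (α_ (F.obj x) (F.obj (𝟙_ C)) (F.obj (𝟙_ C))).hom ≫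
            (F.obj x ◁ Fm (𝟙_ C) (𝟙_ C)) ≫ Fm x ((𝟙_ C) ⊗ (𝟙_ C)) ≫
            F.map (α_ x (𝟙_ C) (𝟙_ C)).inv := by
        rw [← reassoc_of% (hSF1 x (𝟙_ C) (𝟙_ C)), ← F.map_comp]
        simp
      have tri : F.map ((α_ x (𝟙_ C) (𝟙_ C)).inv) ≫ F.map ((ρ_ x).hom ▷ 𝟙_ C)
          = F.map (x ◁ (λ_ (𝟙_ C)).hom) := by
        rw [← F.map_comp, ← MonoidalCategory.triangle, Iso.inv_hom_id_assoc]
      calc (((F.obj x ◁ F₁) ≫ Fm x (𝟙_ C) ≫ F.map (ρ_ x).hom) ▷ F.obj (𝟙_ C)) ≫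
              Fm x (𝟙_ C)
          = ((F.obj x ◁ F₁) ▷ F.obj (𝟙_ C)) ≫ (Fm x (𝟙_ C) ▷ F.obj (𝟙_ C)) ≫
              Fm (x ⊗ 𝟙_ C) (𝟙_ C) ≫ F.map ((ρ_ x).hom ▷ 𝟙_ C) := by
            simp only [comp_whiskerRight, Category.assoc]
            rw [nat1]
        _ = ((F.obj x ◁ F₁) ▷ F.obj (𝟙_ C)) ≫
              (α_ (F.obj x) (F.obj (𝟙_ C)) (F.obj (𝟙_ C))).hom ≫
              (F.obj x ◁ Fm (𝟙_ C) (𝟙_ C)) ≫ Fm x ((𝟙_ C) ⊗ (𝟙_ C)) ≫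
              F.map (α_ x (𝟙_ C) (𝟙_ C)).inv ≫ F.map ((ρ_ x).hom ▷ 𝟙_ C) := by
            rw [reassoc_of% sf1]
        _ = ((F.obj x ◁ F₁) ▷ F.obj (𝟙_ C)) ≫
              (α_ (F.obj x) (F.obj (𝟙_ C)) (F.obj (𝟙_ C))).hom ≫
              (F.obj x ◁ Fm (𝟙_ C) (𝟙_ C)) ≫
              (F.obj x ◁ F.map (λ_ (𝟙_ C)).hom) ≫ Fm x (𝟙_ C) := by
            rw [tri, nat2]
        _ = (α_ (F.obj x) (𝟙_ G) (F.obj (𝟙_ C))).hom ≫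
              (F.obj x ◁ ((F₁ ▷ F.obj (𝟙_ C)) ≫ Fm (𝟙_ C) (𝟙_ C) ≫
                F.map (λ_ (𝟙_ C)).hom)) ≫ Fm x (𝟙_ C) := by
            simp only [MonoidalCategory.whiskerLeft_comp, Category.assoc, whisker_assoc]
            simp
        _ = (α_ (F.obj x) (𝟙_ G) (F.obj (𝟙_ C))).hom ≫
              (F.obj x ◁ (λ_ (F.obj (𝟙_ C))).hom) ≫ Fm x (𝟙_ C) := by
            rw [hlam (𝟙_ C)]
        _ = ((ρ_ (F.obj x)).hom ▷ F.obj (𝟙_ C)) ≫ Fm x (𝟙_ C) := by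
            rw [← MonoidalCategory.triangle, Category.assoc]
    exact ⟨hlam, hrho⟩
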